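/- Let H be a finite simple graph with at least one edge, let G = KG(H) be the complement of the line graph of H, and let M be any inclusionwise maximal matching of H with |M| = k. Then k ≤ χ(G) ≤ 2k. (In particular, the size of a maximal matching yields a 2-approximation of χ(G).) -/

import Mathlib

open SimpleGraph

/-- `KG H` is the complement of the line graph of `H`: its vertices are the edges of `H`,
two of them being adjacent exactly when the corresponding edges of `H` are disjoint. -/
def KG {V : Type*} (H : SimpleGraph V) : SimpleGraph H.edgeSet where
  Adj e f := e ≠ f ∧ ∀ v, v ∈ (e : Sym2 V) → v ∉ (f : Sym2 V)
  symm := by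
    constructor
    rintro e f ⟨hne, h⟩
    exact ⟨hne.symm, fun v hvf hve => h v hve hvf⟩
  loopless := by
    constructor
    rintro e ⟨hne, -⟩
    exact hne rfl

/-- The chromatic number: least `n` such that `G` has a proper coloring with `n` colors. -/
noncomputable def chromNum {W : Type*} (G : SimpleGraph W) : ℕ :=
  sInf {n | G.Colorable n}

/-- A matching of `H`: a set of pairwise disjoint edges of `H`. -/
def IsMatchingSet {V : Type*} (H : SimpleGraph V) (M : Set (Sym2 V)) : Prop :=
  M ⊆ H.edgeSet ∧ ∀ e ∈ M, ∀ f ∈ M, e ≠ f → ∀ v, v ∈ e → v ∉ f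

/-- An inclusionwise maximal matching: no edge of `H` can be added keeping the
edges pairwise disjoint. -/
def IsMaximalMatchingSet {V : Type*} (H : SimpleGraph V) (M : Set (Sym2 V)) : Prop :=
  IsMatchingSet H M ∧ ∀ e ∈ H.edgeSet, e ∉ M → ∃ f ∈ M, ∃ v, v ∈ e ∧ v ∈ f

/-- The size of any inclusionwise maximal matching of `H` is a 2-approximation of the
chromatic number of the complement of the line graph of `H`. -/
theorem maximal_matching_two_approx {V : Type*} [Fintype V] (H : SimpleGraph V)
    (hE : H.edgeSet.Nonempty) (M : Set (Sym2 V)) (hM : IsMaximalMatchingSet H M)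
    (k : ℕ) (hk : M.ncard = k) :
    k ≤ chromNum (KG H) ∧ chromNum (KG H) ≤ 2 * k := by
  classical
  obtain ⟨⟨hsub, hdisj⟩, hmax⟩ := hM
  have hMfin : M.Finite := Set.toFinite M
  have : Fintype H.edgeSet := Fintype.ofFinite _
  have hcol : (KG H).Colorable (Fintype.card H.edgeSet) := colorable_of_fintype _
  have hne : {n | (KG H).Colorable n}.Nonempty := ⟨_, hcol⟩
  constructor
  · -- lower bound
    apply le_csInf hne
    rintro n ⟨C⟩
    -- injective map from M to Fin n
    have hinj : Function.Injective (fun e : M => C ⟨e.1, hsub e.2⟩) := by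
      rintro ⟨e, he⟩ ⟨f, hf⟩ h
      by_contra hne'
      have hef : (e : Sym2 V) ≠ f := by intro h'; subst h'; exact hne' rfl
      have hadj : (KG H).Adj ⟨e, hsub he⟩ ⟨f, hsub hf⟩ :=
        ⟨fun h' => hef (congrArg Subtype.val h'), fun v hv => hdisj e he f hf hef v hv⟩
      exact C.valid hadj h
    have h1 := Nat.card_le_card_of_injective _ hinj
    have h2 : Nat.card M ≤ n := by simpa using h1
    rwa [Nat.card_coe_set_eq, hk] at h2
  · -- upper bound
    set S : Set V := {v | ∃ f ∈ M, v ∈ f} with hS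
    -- choice function
    have hpick : ∀ e : H.edgeSet, ∃ v, v ∈ (e : Sym2 V) ∧ v ∈ S := by
      rintro ⟨e, he⟩
      by_cases heM : e ∈ M
      · obtain ⟨a, b⟩ := e
        exact ⟨a, Sym2.mem_mk_left a b, ⟨s(a, b), heM, Sym2.mem_mk_left a b⟩⟩
      · obtain ⟨f, hf, v, hv, hvf⟩ := hmax e he heM
        exact ⟨v, hv, f, hf, hvf⟩
    have hSfin : S.Finite := Set.toFinite S
    have : Fintype S := Fintype.ofFinite _
    let C : (KG H).Coloring S :=
      Coloring.mk (fun e => ⟨(hpick e).choose, (hpick e).choose_spec.2⟩) (by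
        rintro e f ⟨hne', hd⟩ heq
        have h1 := (hpick e).choose_spec.1
        have h2 := (hpick f).choose_spec.1
        have : (hpick e).choose = (hpick f).choose := congrArg Subtype.val heq
        exact hd _ h1 (this ▸ h2))
    have hcolS : (KG H).Colorable (Fintype.card S) := C.colorable
    have hchrom : chromNum (KG H) ≤ Fintype.card S := csInf_le (OrderBot.bddBelow _) hcolS
    -- card S ≤ 2k
    have hcard : Fintype.card S ≤ 2 * k := by
      have hScard : Fintype.card S = S.ncard := by
        rw [Set.ncard_eq_toFinset_card', Set.toFinset_card]
      rw [hScard]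
      set fs : Sym2 V → Finset V := fun s => Finset.univ.filter (· ∈ s) with hfs
      have hfscard : ∀ s : Sym2 V, (fs s).card ≤ 2 := by
        intro s
        obtain ⟨a, b⟩ := s
        have hsub2 : fs s(a, b) ⊆ {a, b} := by
          intro v hv
          simp only [hfs, Finset.mem_filter, Sym2.mem_iff] at hv
          simpa using hv.2
        calc (fs s(a,b)).card ≤ ({a,b} : Finset V).card := Finset.card_le_card hsub2
          _ ≤ 2 := by
            refine (Finset.card_insert_le a {b}).trans ?_
            simp
      have hF : S ⊆ ↑(hMfin.toFinset.biUnion fs) := by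
        rintro v ⟨f, hf, hvf⟩
        simp only [Finset.coe_biUnion, Set.mem_iUnion]
        exact ⟨f, by simpa using hf, by simp [hfs, hvf]⟩
      calc S.ncard ≤ (↑(hMfin.toFinset.biUnion fs) : Set V).ncard :=
            Set.ncard_le_ncard hF (Set.toFinite _)
        _ = (hMfin.toFinset.biUnion fs).card := Set.ncard_coe_finset _
        _ ≤ ∑ f ∈ hMfin.toFinset, (fs f).card := Finset.card_biUnion_le
        _ ≤ ∑ _f ∈ hMfin.toFinset, 2 := Finset.sum_le_sum (fun f _ => hfscard f)
        _ = 2 * hMfin.toFinset.card := by rw [Finset.sum_const, smul_eq_mul, Nat.mul_comm]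
        _ = 2 * k := by rw [Set.ncard_eq_toFinset_card _ hMfin] at hk; rw [hk]
    omega
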